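/- Let F : C → C be an endofunctor, b : B → F B a coalgebra, and suppose B admits a free F-algebra (T, α : F T → T, in : B → T). Define unfold : T → T as the unique algebra endomorphism of (T, α) extending the map α ∘ F(in) ∘ b : B → T. Then: an algebra morphism f : (T, α) → (A, a) satisfies f ∘ unfold = f if and only if the composite f ∘ in : B → A is a coalgebra-to-algebra morphism from b to a. -/
import Mathlib


open CategoryTheory

/-- Let `(T, α, in')` be the free `F`-algebra on `B`, `b : B ⟶ F B` a
coalgebra, and `unfold : T ⟶ T` the unique algebra endomorphism extending
`α ∘ F(in') ∘ b`. Then an algebra morphism `f : (T, α) ⟶ (A, a)` coequalizes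
`id` and `unfold` iff `f ∘ in'` is a coalgebra-to-algebra morphism from `b`
to `a`. -/
theorem coequalizes_unfold_iff_ca_morphism
    {C : Type*} [Category C] (F : C ⥤ C)
    {B T : C} (b : B ⟶ F.obj B) (α : F.obj T ⟶ T) (in' : B ⟶ T)
    (free : ∀ (A : C) (a : F.obj A ⟶ A) (j : B ⟶ A),
      ∃! g : T ⟶ A, (F.map g ≫ a = α ≫ g) ∧ in' ≫ g = j)
    (unfold : T ⟶ T)
    (hunfold₁ : F.map unfold ≫ α = α ≫ unfold)
    (hunfold₂ : in' ≫ unfold = b ≫ F.map in' ≫ α) :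
    ∀ (A : C) (a : F.obj A ⟶ A) (f : T ⟶ A), F.map f ≫ a = α ≫ f →
      ((unfold ≫ f = f) ↔ (in' ≫ f = b ≫ F.map (in' ≫ f) ≫ a)) := by
  intro A a f hf
  constructor
  · intro h
    conv_lhs => rw [← h, ← Category.assoc, hunfold₂]
    simp only [F.map_comp, Category.assoc, hf]
  · intro h
    obtain ⟨g, -, hu⟩ := free A a (in' ≫ f)
    have h1 : unfold ≫ f = g := by
      apply hu
      constructor
      · simp only [F.map_comp, Category.assoc, hf]
        rw [← Category.assoc, hunfold₁, Category.assoc]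
      · rw [← Category.assoc, hunfold₂]
        simp only [Category.assoc]
        rw [← hf]
        rw [h]
        simp [F.map_comp]
    have h2 : f = g := hu f ⟨hf, rfl⟩
    rw [h1, h2]
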